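/- For a > 0 define v_a : ℝ → ℝ by v_a(x) = 2·arctan(x/a). Let n ≥ 1, let K, L ≥ 0 be natural numbers, let α > 0, β ∈ [0,1), a_1,…,a_K > 0, b_1,…,b_L > 0, and let μ = (μ_1,…,μ_n) ∈ ℤ^n with μ_1 > μ_2 > … > μ_n. Then the function V : ℝ^n → ℝ defined by V(ξ) = Σ_{j=1}^n ( (α/2)ξ_j² − 2π(μ_j+β)ξ_j + Σ_{k=1}^K ∫_0^{ξ_j} v_{a_k}(x) dx ) + Σ_{1≤j<j′≤n} Σ_{l=1}^L ∫_0^{ξ_j−ξ_{j′}} v_{b_l}(x) dx is strictly convex on ℝ^n. -/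

import Mathlib

open Real Finset

/-- The rational function `v_a(x) = 2 arctan(x/a)`. -/
noncomputable def vRat (a x : ℝ) : ℝ := 2 * Real.arctan (x / a)

lemma vRat_monotone {a : ℝ} (ha : 0 < a) : Monotone (vRat a) := by
  intro x y hxy
  unfold vRat
  have h : x / a ≤ y / a := by gcongr
  exact mul_le_mul_of_nonneg_left (Real.arctan_strictMono.monotone h) (by norm_num)

lemma vRat_continuous (a : ℝ) : Continuous (vRat a) := by
  unfold vRat
  exact continuous_const.mul (Real.continuous_arctan.comp (continuous_id.div_const a))

lemma convexOn_intIntegral_vRat {a : ℝ} (ha : 0 < a) :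
    ConvexOn ℝ Set.univ (fun t => ∫ x in (0:ℝ)..t, vRat a x) := by
  have hc := vRat_continuous a
  have hd : Differentiable ℝ (fun t => ∫ x in (0:ℝ)..t, vRat a x) := fun t =>
    (intervalIntegral.integral_hasDerivAt_right (hc.intervalIntegrable _ _)
      (hc.stronglyMeasurableAtFilter _ _) hc.continuousAt).differentiableAt
  have hder : deriv (fun t => ∫ x in (0:ℝ)..t, vRat a x) = vRat a :=
    funext fun t => hc.deriv_integral (vRat a) 0 t
  refine Monotone.convexOn_univ_of_deriv hd ?_
  rw [hder]; exact vRat_monotone ha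

/-- A linear function on `ℝ` is convex. -/
lemma convexOn_linear (c : ℝ) : ConvexOn ℝ Set.univ (fun x : ℝ => c * x) :=
  ⟨convex_univ, fun x _ y _ p q _ _ _ => le_of_eq (by simp [smul_eq_mul]; ring)⟩

/-- Sum of convex functions over a finset is convex. -/
lemma convexOn_finset_sum {E : Type*} [AddCommGroup E] [Module ℝ E] {ι : Type*}
    (s : Finset ι) (f : ι → E → ℝ) (hf : ∀ i ∈ s, ConvexOn ℝ Set.univ (f i)) :
    ConvexOn ℝ Set.univ (fun x => ∑ i ∈ s, f i x) := by
  classical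
  induction s using Finset.induction with
  | empty => simpa using convexOn_const (0:ℝ) convex_univ
  | insert _ _ hi ih =>
    simp only [Finset.sum_insert hi]
    exact (hf _ (Finset.mem_insert_self _ _)).add
      (ih fun i his => hf i (Finset.mem_insert_of_mem his))

/-- Composition of a convex function with `ξ ↦ ξ j - ξ j'` is convex. -/
lemma convexOn_comp_sub {n : ℕ} (j j' : Fin n) {g : ℝ → ℝ}
    (hg : ConvexOn ℝ Set.univ g) :
    ConvexOn ℝ Set.univ (fun ξ : Fin n → ℝ => g (ξ j - ξ j')) := by
  refine ⟨convex_univ, fun x _ y _ p q hp hq hpq => ?_⟩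
  have h := hg.2 (Set.mem_univ (x j - x j')) (Set.mem_univ (y j - y j')) hp hq hpq
  have key : (p • x + q • y) j - (p • x + q • y) j'
      = p • (x j - x j') + q • (y j - y j') := by
    simp [smul_eq_mul]; ring
  show g ((p • x + q • y) j - (p • x + q • y) j') ≤ _
  rw [key]; exact h

/-- A sum over coordinates of strictly convex functions is strictly convex. -/
lemma strictConvexOn_sum_coord {n : ℕ} (f : Fin n → ℝ → ℝ)
    (hf : ∀ j, StrictConvexOn ℝ Set.univ (f j)) :
    StrictConvexOn ℝ Set.univ (fun ξ : Fin n → ℝ => ∑ j, f j (ξ j)) := by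
  refine ⟨convex_univ, fun x _ y _ hxy p q hp hq hpq => ?_⟩
  obtain ⟨j0, hj0⟩ : ∃ j, x j ≠ y j := by
    by_contra h; push_neg at h; exact hxy (funext h)
  have hlt : ∑ j, f j ((p • x + q • y) j) <
      ∑ j, (p * f j (x j) + q * f j (y j)) := by
    refine Finset.sum_lt_sum (fun j _ => ?_) ⟨j0, Finset.mem_univ j0, ?_⟩
    · have := (hf j).convexOn.2 (Set.mem_univ (x j)) (Set.mem_univ (y j)) hp.le hq.le hpq
      simpa [smul_eq_mul] using this
    · have := (hf j0).2 (Set.mem_univ (x j0)) (Set.mem_univ (y j0)) hj0 hp hq hpq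
      simpa [smul_eq_mul] using this
  calc ∑ j, f j ((p • x + q • y) j) < ∑ j, (p * f j (x j) + q * f j (y j)) := hlt
    _ = p • ∑ j, f j (x j) + q • ∑ j, f j (y j) := by
        simp [Finset.sum_add_distrib, Finset.mul_sum, smul_eq_mul]

/-- Each one-coordinate piece is strictly convex. -/
lemma strictConvexOn_piece (α c : ℝ) (hα : 0 < α) {K : ℕ} (a : Fin K → ℝ)
    (ha : ∀ k, 0 < a k) :
    StrictConvexOn ℝ Set.univ (fun x : ℝ =>
      (α / 2) * x ^ 2 - c * x + ∑ k, ∫ t in (0:ℝ)..x, vRat (a k) t) := by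
  have h1 : StrictConvexOn ℝ Set.univ (fun x : ℝ => (α / 2) * x ^ 2) := by
    have hsq := Even.strictConvexOn_pow (n := 2) (by decide) (by norm_num)
    refine ⟨convex_univ, fun x hx y hy hxy p q hp hq hpq => ?_⟩
    have h := hsq.2 hx hy hxy hp hq hpq
    simp only [smul_eq_mul] at h ⊢
    nlinarith [h]
  have h2 : ConvexOn ℝ Set.univ (fun x : ℝ => -c * x) := convexOn_linear (-c)
  have h3 : ConvexOn ℝ Set.univ (fun x : ℝ => ∑ k, ∫ t in (0:ℝ)..x, vRat (a k) t) :=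
    convexOn_finset_sum _ _ fun k _ => convexOn_intIntegral_vRat (ha k)
  have key := (h1.add_convexOn h2).add_convexOn h3
  have hfun : (fun x : ℝ =>
      (α / 2) * x ^ 2 - c * x + ∑ k, ∫ t in (0:ℝ)..x, vRat (a k) t)
      = (((fun x : ℝ => (α / 2) * x ^ 2) + fun x => -c * x) +
        fun x => ∑ k, ∫ t in (0:ℝ)..x, vRat (a k) t) := by
    funext x; simp only [Pi.add_apply]; ring
  rw [hfun]; exact key

/-- The rational type A Yang–Yang Morse function is strictly convex on `ℝⁿ`. -/
theorem ratA_morse_strictConvexOn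
    (n K L : ℕ) (hn : 1 ≤ n)
    (α β : ℝ) (hα : 0 < α) (hβ0 : 0 ≤ β) (hβ1 : β < 1)
    (a : Fin K → ℝ) (b : Fin L → ℝ)
    (ha : ∀ k, 0 < a k) (hb : ∀ l, 0 < b l)
    (μ : Fin n → ℤ) (hμ : ∀ j j' : Fin n, j < j' → μ j' < μ j) :
    StrictConvexOn ℝ Set.univ (fun ξ : Fin n → ℝ =>
      (∑ j, ((α / 2) * ξ j ^ 2 - 2 * π * ((μ j : ℝ) + β) * ξ j +
        ∑ k, ∫ x in (0:ℝ)..(ξ j), vRat (a k) x)) +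
      (∑ j, ∑ j' ∈ Finset.univ.filter (fun j' => j < j'), ∑ l,
        ∫ x in (0:ℝ)..(ξ j - ξ j'), vRat (b l) x)) := by
  have h1 : StrictConvexOn ℝ Set.univ (fun ξ : Fin n → ℝ =>
      ∑ j, ((α / 2) * ξ j ^ 2 - 2 * π * ((μ j : ℝ) + β) * ξ j +
        ∑ k, ∫ x in (0:ℝ)..(ξ j), vRat (a k) x)) :=
    strictConvexOn_sum_coord _ fun j =>
      strictConvexOn_piece α (2 * π * ((μ j : ℝ) + β)) hα a ha
  have h2 : ConvexOn ℝ Set.univ (fun ξ : Fin n → ℝ =>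
      ∑ j, ∑ j' ∈ Finset.univ.filter (fun j' => j < j'), ∑ l,
        ∫ x in (0:ℝ)..(ξ j - ξ j'), vRat (b l) x) := by
    refine convexOn_finset_sum _ _ fun j _ => ?_
    refine convexOn_finset_sum _ _ fun j' _ => ?_
    refine convexOn_finset_sum _ _ fun l _ => ?_
    exact convexOn_comp_sub j j' (convexOn_intIntegral_vRat (hb l))
  exact h1.add_convexOn h2
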